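/- Fix c > 0. The function δ_c(x) = B_c(x) - R_c(x) is symmetric about c/2, i.e., δ_c(c-x) = δ_c(x) for x ∈ (0,c), strictly increasing on (0, c/2) and strictly decreasing on (c/2, c). -/

import Mathlib

noncomputable def digamma (x : ℝ) : ℝ := deriv (fun y : ℝ => Real.log (Real.Gamma y)) x

noncomputable def Bc (c x : ℝ) : ℝ := Real.Gamma x * Real.Gamma (c - x) / Real.Gamma c

noncomputable def Rc (c x : ℝ) : ℝ :=
  -digamma x - digamma (c - x) - 2 * Real.eulerMascheroniConstant

namespace StmtAux

open Real Set Filter Topology MeasureTheory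

/-! ### Digamma difference series -/

lemma logGamma_diff {x : ℝ} (hx : 0 < x) :
    DifferentiableAt ℝ (fun y : ℝ => Real.log (Real.Gamma y)) x :=
  (Real.differentiableAt_Gamma (fun m => by nlinarith [Nat.cast_nonneg (α := ℝ) m])).log
    (Real.Gamma_pos_of_pos hx).ne'

lemma digamma_rec {x : ℝ} (hx : 0 < x) : digamma (x + 1) = digamma x + 1 / x := by
  unfold digamma
  rw [← deriv_comp_add_const _ 1, one_div, ← Real.deriv_log,
    ← deriv_add (logGamma_diff hx) (Real.differentiableAt_log hx.ne')]
  apply Filter.EventuallyEq.deriv_eq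
  filter_upwards [eventually_gt_nhds hx] with t ht
  simp only [Real.Gamma_add_one ht.ne', Real.log_mul ht.ne' (Real.Gamma_pos_of_pos ht).ne',
    add_comm, Pi.add_apply]

lemma digamma_mono {a b : ℝ} (ha : 0 < a) (hab : a ≤ b) : digamma a ≤ digamma b := by
  have h := Real.convexOn_log_Gamma.monotoneOn_deriv (fun x hx => by
    simpa [Function.comp_def] using logGamma_diff hx)
  have := h (mem_Ioi.2 ha) (mem_Ioi.2 (ha.trans_le hab)) hab
  simpa [digamma, Function.comp_def] using this

lemma digamma_add_nat {a : ℝ} (ha : 0 < a) (n : ℕ) :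
    digamma (a + n) = digamma a + ∑ k ∈ Finset.range n, 1 / (a + k) := by
  induction n with
  | zero => simp
  | succ n ih =>
      have h1 : a + ((n : ℝ) + 1) = (a + n) + 1 := by ring
      have h2 : (0:ℝ) < a + n := by positivity
      rw [Finset.sum_range_succ, Nat.cast_add, Nat.cast_one, h1, digamma_rec h2, ih]
      ring

lemma digamma_hasSum {a b : ℝ} (ha : 0 < a) (hab : a ≤ b) :
    HasSum (fun n : ℕ => 1 / (a + n) - 1 / (b + n)) (digamma b - digamma a) := by
  have hb : 0 < b := ha.trans_le hab
  have hnonneg : ∀ n : ℕ, 0 ≤ 1 / (a + n) - 1 / (b + n) := by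
    intro n
    have h1 : (0:ℝ) < a + n := by positivity
    have h2 : (0:ℝ) < b + n := by positivity
    have : 1 / (b + n) ≤ 1 / (a + n) := by
      apply one_div_le_one_div_of_le h1; linarith
    linarith
  have hpartial : ∀ n : ℕ, ∑ k ∈ Finset.range n, (1 / (a + k) - 1 / (b + k))
      = (digamma (a + n) - digamma a) - (digamma (b + n) - digamma b) := by
    intro n
    rw [Finset.sum_sub_distrib, digamma_add_nat ha n, digamma_add_nat hb n]
    ring
  obtain ⟨m, hm⟩ : ∃ m : ℕ, b ≤ a + m := ⟨⌈b - a⌉₊, by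
    have := Nat.le_ceil (b - a); linarith⟩
  have htail : Tendsto (fun n : ℕ => digamma (b + n) - digamma (a + n)) atTop (𝓝 0) := by
    have hub : ∀ n : ℕ, digamma (b + n) - digamma (a + n) ≤ m * (1 / (a + n)) := by
      intro n
      have h1 : (0:ℝ) < a + n := by positivity
      have hle : digamma (b + n) ≤ digamma (a + n + m) := by
        apply digamma_mono (by positivity)
        linarith
      have : digamma (a + n + m) = digamma (a + n) + ∑ k ∈ Finset.range m, 1 / (a + n + k) :=
        digamma_add_nat h1 m
      have hsumle : ∑ k ∈ Finset.range m, 1 / (a + n + k) ≤ m * (1 / (a + n)) := by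
        calc ∑ k ∈ Finset.range m, 1 / (a + n + k)
            ≤ ∑ _k ∈ Finset.range m, 1 / (a + n) := by
              apply Finset.sum_le_sum
              intro k _
              apply one_div_le_one_div_of_le h1
              have : (0:ℝ) ≤ k := Nat.cast_nonneg k
              linarith
          _ = m * (1 / (a + n)) := by simp [Finset.sum_const, mul_comm]
      linarith
    have hlb : ∀ n : ℕ, 0 ≤ digamma (b + n) - digamma (a + n) := by
      intro n
      have : digamma (a + n) ≤ digamma (b + n) := by
        apply digamma_mono (by positivity); linarith
      linarith
    have hto : Tendsto (fun n : ℕ => (m : ℝ) * (1 / (a + n))) atTop (𝓝 0) := by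
      have h1 : Tendsto (fun n : ℕ => a + (n : ℝ)) atTop atTop :=
        tendsto_atTop_add_const_left _ _ tendsto_natCast_atTop_atTop
      have := h1.inv_tendsto_atTop
      simpa [one_div] using (this.const_mul (m : ℝ)).congr (fun n => by simp [Pi.inv_apply])
    exact squeeze_zero hlb hub hto
  have hsm : Summable (fun n : ℕ => 1 / (a + n) - 1 / (b + n)) := by
    apply summable_of_sum_range_le hnonneg (c := digamma b - digamma a)
    intro n
    rw [hpartial n]
    have h1 : digamma (a + n) ≤ digamma (b + n) := by
      apply digamma_mono (by positivity); linarith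
    linarith
  have h1 := hsm.hasSum
  have h2 := h1.tendsto_sum_nat
  have h3 : Tendsto (fun n : ℕ => ∑ k ∈ Finset.range n, (1 / (a + k) - 1 / (b + k)))
      atTop (𝓝 (digamma b - digamma a)) := by
    have : (fun n : ℕ => ∑ k ∈ Finset.range n, (1 / (a + k) - 1 / (b + k)))
        = fun n : ℕ => (digamma b - digamma a) - (digamma (b + n) - digamma (a + n)) := by
      funext n; rw [hpartial n]; ring
    rw [this]
    simpa using tendsto_const_nhds.sub htail
  have := tendsto_nhds_unique h2 h3
  rwa [this] at h1

/-! ### Elementary integral facts -/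

lemma exp_intOn {p : ℝ} (hp : 0 < p) :
    IntegrableOn (fun v => Real.exp (-(p * v))) (Ioi (0:ℝ)) := by
  simpa [neg_mul] using exp_neg_integrableOn_Ioi 0 hp

lemma exp_int {p : ℝ} (hp : 0 < p) :
    ∫ v in Ioi (0:ℝ), Real.exp (-(p * v)) = 1 / p := by
  have := MeasureTheory.integral_comp_mul_left_Ioi (fun x => Real.exp (-x)) 0 hp
  simp only [mul_zero] at this
  rw [integral_exp_neg_Ioi_zero] at this
  simpa [one_div] using this

lemma one_sub_exp_le (t : ℝ) : 1 - Real.exp (-t) ≤ t := by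
  have := Real.add_one_le_exp (-t); linarith

lemma exp_lower {v : ℝ} : v * Real.exp (-v) ≤ 1 - Real.exp (-v) := by
  have h := Real.add_one_le_exp v
  have h2 : (v + 1) * Real.exp (-v) ≤ Real.exp v * Real.exp (-v) := by
    apply mul_le_mul_of_nonneg_right h (Real.exp_pos _).le
  rw [← Real.exp_add] at h2
  simp at h2
  nlinarith [Real.exp_pos (-v)]

lemma hmeas_quot {a b : ℝ} : Measurable
    (fun v => (Real.exp (-(a*v)) - Real.exp (-(b*v))) / (1 - Real.exp (-v))) := by
  fun_prop

lemma num_nonneg {a b v : ℝ} (hab : a ≤ b) (hv : 0 ≤ v) :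
    0 ≤ Real.exp (-(a*v)) - Real.exp (-(b*v)) := by
  have : -(b*v) ≤ -(a*v) := by nlinarith
  have := Real.exp_le_exp.2 this; linarith

lemma den_pos {v : ℝ} (hv : 0 < v) : 0 < 1 - Real.exp (-v) := by
  have : Real.exp (-v) < 1 := by rw [Real.exp_lt_one_iff]; linarith
  linarith

lemma quot_integrable {a b : ℝ} (ha : 0 < a) (hab : a ≤ b) :
    IntegrableOn (fun v => (Real.exp (-(a*v)) - Real.exp (-(b*v))) / (1 - Real.exp (-v)))
      (Ioi (0:ℝ)) := by
  set h : ℝ → ℝ := fun v => (Real.exp (-(a*v)) - Real.exp (-(b*v))) / (1 - Real.exp (-v))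
    with hh
  have hmeas : AEStronglyMeasurable h volume := hmeas_quot.aestronglyMeasurable
  have hI1 : IntegrableOn h (Ioc (0:ℝ) 1) := by
    apply Measure.integrableOn_of_bounded (M := (b - a) * Real.exp 1) (by simp) hmeas
    filter_upwards [ae_restrict_mem measurableSet_Ioc] with v hv
    obtain ⟨hv0, hv1⟩ := hv
    have hden := den_pos hv0
    have hnn : 0 ≤ h v := div_nonneg (num_nonneg hab hv0.le) hden.le
    rw [Real.norm_eq_abs, abs_of_nonneg hnn]
    have hnum : Real.exp (-(a*v)) - Real.exp (-(b*v)) ≤ (b - a) * v := by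
      have h1 : Real.exp (-(a*v)) - Real.exp (-(b*v))
          = Real.exp (-(a*v)) * (1 - Real.exp (-((b-a)*v))) := by
        rw [mul_sub, mul_one, ← Real.exp_add]; ring_nf
      have h2 : 1 - Real.exp (-((b-a)*v)) ≤ (b-a)*v := one_sub_exp_le _
      have h3 : Real.exp (-(a*v)) ≤ 1 := by
        rw [Real.exp_le_one_iff]; nlinarith
      have h4 : 0 ≤ 1 - Real.exp (-((b-a)*v)) := by
        have : Real.exp (-((b-a)*v)) ≤ 1 := by
          rw [Real.exp_le_one_iff]; nlinarith
        linarith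
      nlinarith
    have hden2 : v * Real.exp (-1) ≤ 1 - Real.exp (-v) := by
      have h6 := exp_lower (v := v)
      have h5 : Real.exp (-1) ≤ Real.exp (-v) := Real.exp_le_exp.2 (by linarith)
      nlinarith
    have hvpos : (0:ℝ) < v * Real.exp (-1) := by positivity
    have hnum0 : (0:ℝ) ≤ (b-a) * v := by nlinarith
    calc h v ≤ ((b-a)*v) / (v * Real.exp (-1)) := div_le_div₀ hnum0 hnum hvpos hden2
      _ = (b - a) * Real.exp 1 := by
          rw [Real.exp_neg]
          field_simp
  have hI2 : IntegrableOn h (Ioi (1:ℝ)) := by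
    apply Integrable.mono'
      (((exp_intOn ha).mono_set (Ioi_subset_Ioi zero_le_one)).const_mul ((1 - Real.exp (-1))⁻¹))
      hmeas.restrict
    filter_upwards [ae_restrict_mem measurableSet_Ioi] with v hv
    have hv1 : (1:ℝ) < v := hv
    have hv0 : (0:ℝ) < v := by linarith
    have hdenpos : (0:ℝ) < 1 - Real.exp (-1) := den_pos one_pos
    have hden : 1 - Real.exp (-1) ≤ 1 - Real.exp (-v) := by
      have : Real.exp (-v) ≤ Real.exp (-1) := Real.exp_le_exp.2 (by linarith)
      linarith
    have hnn : 0 ≤ h v := div_nonneg (num_nonneg hab hv0.le) (den_pos hv0).le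
    rw [Real.norm_eq_abs, abs_of_nonneg hnn]
    have hnum : Real.exp (-(a*v)) - Real.exp (-(b*v)) ≤ Real.exp (-(a*v)) := by
      have := (Real.exp_pos (-(b*v))).le; linarith
    calc h v ≤ Real.exp (-(a*v)) / (1 - Real.exp (-1)) :=
          div_le_div₀ (Real.exp_pos _).le hnum hdenpos hden
      _ = (1 - Real.exp (-1))⁻¹ * Real.exp (-(a*v)) := by ring
  have := hI1.union hI2
  rwa [Ioc_union_Ioi_eq_Ioi zero_le_one] at this

lemma exp_shift (a v : ℝ) (n : ℕ) :
    Real.exp (-((a + n) * v)) = Real.exp (-(a*v)) * Real.exp (-v) ^ n := by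
  rw [← Real.exp_nat_mul, ← Real.exp_add]; ring_nf

lemma exp_summable (a : ℝ) {v : ℝ} (hv : 0 < v) :
    Summable (fun n : ℕ => Real.exp (-((a + n) * v))) := by
  have h1 : Real.exp (-v) < 1 := by rw [Real.exp_lt_one_iff]; linarith
  have := (summable_geometric_of_lt_one (Real.exp_pos (-v)).le h1).mul_left (Real.exp (-(a*v)))
  apply this.congr
  intro n
  rw [exp_shift]

lemma geom_exp (a : ℝ) {v : ℝ} (hv : 0 < v) :
    ∑' n : ℕ, Real.exp (-((a + n) * v)) = Real.exp (-(a * v)) / (1 - Real.exp (-v)) := by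
  have h1 : Real.exp (-v) < 1 := by rw [Real.exp_lt_one_iff]; linarith
  have h0 : (0:ℝ) ≤ Real.exp (-v) := (Real.exp_pos _).le
  rw [tsum_congr (exp_shift a v), tsum_mul_left, tsum_geometric_of_lt_one h0 h1]
  ring

lemma psi_int_val {a b : ℝ} (ha : 0 < a) (hab : a ≤ b) :
    ∫ v in Ioi (0:ℝ), (Real.exp (-(a*v)) - Real.exp (-(b*v))) / (1 - Real.exp (-v))
      = digamma b - digamma a := by
  have hb : 0 < b := ha.trans_le hab
  set F : ℕ → ℝ → ℝ := fun n v => Real.exp (-((a+n)*v)) - Real.exp (-((b+n)*v)) with hF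
  have hpa : ∀ n : ℕ, (0:ℝ) < a + n := fun n => by positivity
  have hpb : ∀ n : ℕ, (0:ℝ) < b + n := fun n => by positivity
  have hFint : ∀ n, Integrable (F n) (volume.restrict (Ioi 0)) := fun n =>
    (exp_intOn (hpa n)).sub (exp_intOn (hpb n))
  have hFval : ∀ n, (∫ v in Ioi (0:ℝ), F n v) = 1/(a+n) - 1/(b+n) := by
    intro n
    rw [integral_sub (exp_intOn (hpa n)) (exp_intOn (hpb n)), exp_int (hpa n), exp_int (hpb n)]
  have hFnorm : ∀ n, (∫ v in Ioi (0:ℝ), ‖F n v‖) = 1/(a+n) - 1/(b+n) := by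
    intro n
    rw [setIntegral_congr_fun measurableSet_Ioi (g := F n) ?_, hFval n]
    intro v hv
    exact norm_of_nonneg (num_nonneg (by linarith : a + (n:ℝ) ≤ b + n) (le_of_lt hv))
  have hsummable : Summable fun n => ∫ v in Ioi (0:ℝ), ‖F n v‖ := by
    rw [funext hFnorm]
    exact (digamma_hasSum ha hab).summable
  have key := integral_tsum_of_summable_integral_norm hFint hsummable
  have h1 : ∑' n, (∫ v in Ioi (0:ℝ), F n v) = digamma b - digamma a := by
    rw [tsum_congr hFval]
    exact (digamma_hasSum ha hab).tsum_eq
  have h2 : (∫ v in Ioi (0:ℝ), (∑' n, F n v))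
      = ∫ v in Ioi (0:ℝ), (Real.exp (-(a*v)) - Real.exp (-(b*v))) / (1 - Real.exp (-v)) := by
    apply setIntegral_congr_fun measurableSet_Ioi
    intro v hv
    have hv0 : (0:ℝ) < v := hv
    simp only [hF]
    rw [Summable.tsum_sub (exp_summable a hv0) (exp_summable b hv0), geom_exp a hv0, geom_exp b hv0,
      div_sub_div_same]
  rw [← h2, ← key, h1]

/-! ### The Beta integral and its exponential form -/

lemma cpow_real_eq {t : ℝ} (ht : 0 ≤ t) (p : ℝ) :
    (t:ℂ) ^ ((p:ℂ) - 1) = ((t ^ (p-1) : ℝ) : ℂ) := by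
  rw [show ((p:ℂ) - 1) = ((p - 1 : ℝ) : ℂ) by push_cast; ring, ← Complex.ofReal_cpow ht]

lemma beta_real {a b : ℝ} (ha : 0 < a) (hb : 0 < b) :
    (∫ t in Ioo (0:ℝ) 1, t ^ (a-1) * (1-t) ^ (b-1))
      = Real.Gamma a * Real.Gamma b / Real.Gamma (a+b) := by
  have key := Complex.Gamma_mul_Gamma_eq_betaIntegral
    (s := (a:ℂ)) (t := (b:ℂ)) (by simpa using ha) (by simpa using hb)
  have hη : Complex.betaIntegral a b = ((∫ t in (0:ℝ)..1, t ^ (a-1) * (1-t) ^ (b-1) : ℝ) : ℂ) := by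
    rw [Complex.betaIntegral, ← intervalIntegral.integral_ofReal]
    apply intervalIntegral.integral_congr
    intro t ht
    rw [uIcc_of_le zero_le_one] at ht
    obtain ⟨ht0, ht1⟩ := ht
    push_cast
    rw [show (1 - (t:ℂ)) = ((1-t:ℝ):ℂ) by push_cast; ring]
    rw [cpow_real_eq ht0 a, cpow_real_eq (by linarith : (0:ℝ) ≤ 1 - t) b]
  rw [hη] at key
  have hG : Complex.Gamma (a:ℂ) = (Real.Gamma a : ℂ) := Complex.Gamma_ofReal a
  have hGb : Complex.Gamma (b:ℂ) = (Real.Gamma b : ℂ) := Complex.Gamma_ofReal b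
  have hGab : Complex.Gamma ((a:ℂ)+(b:ℂ)) = (Real.Gamma (a+b) : ℂ) := by
    rw [show (a:ℂ)+(b:ℂ) = ((a+b:ℝ):ℂ) by push_cast; ring, Complex.Gamma_ofReal]
  rw [hG, hGb, hGab] at key
  have key2 : Real.Gamma a * Real.Gamma b
      = Real.Gamma (a+b) * ∫ t in (0:ℝ)..1, t ^ (a-1) * (1-t) ^ (b-1) := by
    exact_mod_cast key
  have hpos : 0 < Real.Gamma (a+b) := Real.Gamma_pos_of_pos (by linarith)
  rw [intervalIntegral.integral_of_le zero_le_one, integral_Ioc_eq_integral_Ioo] at key2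
  rw [eq_div_iff hpos.ne']
  linarith [key2]

lemma beta_integrable {a b : ℝ} (ha : 0 < a) (hb : 0 < b) :
    IntegrableOn (fun t : ℝ => t ^ (a-1) * (1-t) ^ (b-1)) (Ioo (0:ℝ) 1) := by
  have h := (Complex.betaIntegral_convergent (u := (a:ℂ)) (v := (b:ℂ))
    (by simpa using ha) (by simpa using hb)).norm
  rw [intervalIntegrable_iff_integrableOn_Ioc_of_le zero_le_one] at h
  apply IntegrableOn.congr_fun (h.mono_set Ioo_subset_Ioc_self) ?_ measurableSet_Ioo
  intro t ht
  obtain ⟨ht0, ht1⟩ := ht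
  simp only [norm_mul]
  rw [show (1 - (t:ℂ)) = ((1-t:ℝ):ℂ) by push_cast; ring,
    Complex.norm_cpow_eq_rpow_re_of_pos ht0, Complex.norm_cpow_eq_rpow_re_of_pos (by linarith)]
  norm_num

noncomputable def mfun (u : ℝ) : ℝ := (1 + Real.exp (-u))⁻¹
noncomputable def mder (u : ℝ) : ℝ := Real.exp (-u) / (1 + Real.exp (-u)) ^ 2

lemma one_add_exp_pos (u : ℝ) : 0 < 1 + Real.exp (-u) := by positivity

lemma mfun_hasDeriv (u : ℝ) : HasDerivAt mfun (mder u) u := by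
  have h1 : HasDerivAt (fun u : ℝ => Real.exp (-u)) (-Real.exp (-u)) u := by
    simpa [Function.comp_def] using (Real.hasDerivAt_exp (-u)).comp u (hasDerivAt_neg u)
  have h2 : HasDerivAt (fun u : ℝ => 1 + Real.exp (-u)) (-Real.exp (-u)) u :=
    h1.const_add 1
  have h3 := h2.inv (one_add_exp_pos u).ne'
  have h4 : HasDerivAt (fun u : ℝ => 1 + Real.exp (-u))⁻¹ (mder u) u := by
    simpa [mder, neg_div] using h3
  exact h4

lemma mfun_mono : StrictMono mfun := by
  intro u v huv
  have h1 : Real.exp (-v) < Real.exp (-u) := Real.exp_lt_exp.2 (by linarith)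
  have := one_add_exp_pos v
  exact inv_strictAnti₀ (by positivity) (by linarith)

lemma mfun_mem (u : ℝ) : mfun u ∈ Ioo (0:ℝ) 1 := by
  constructor
  · simp only [mfun]; positivity
  · rw [mfun, inv_lt_one_iff₀]
    right
    have := Real.exp_pos (-u); linarith

lemma mfun_image : mfun '' univ = Ioo (0:ℝ) 1 := by
  apply Subset.antisymm
  · rintro _ ⟨u, -, rfl⟩; exact mfun_mem u
  · rintro t ⟨ht0, ht1⟩
    refine ⟨Real.log (t / (1 - t)), trivial, ?_⟩
    have h1 : 0 < t / (1 - t) := by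
      apply div_pos ht0; linarith
    rw [mfun, ← Real.log_inv, Real.exp_log (by positivity)]
    rw [show (t / (1-t))⁻¹ = (1-t)/t by rw [inv_div]]
    field_simp
    ring

lemma mfun_algebra {c x : ℝ} (u : ℝ) :
    |mder u| • ((mfun u) ^ (x-1) * (1 - mfun u) ^ (c-x-1))
      = Real.exp (-((c-x)*u)) * (1 + Real.exp (-u)) ^ (-c) := by
  set E := Real.exp (-u) with hE
  have hEpos : 0 < E := Real.exp_pos _
  have hP : 0 < 1 + E := one_add_exp_pos u
  have h1 : (1:ℝ) - (1+E)⁻¹ = E / (1+E) := by field_simp; ring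
  have habs : |mder u| = E / (1+E)^2 := abs_of_pos (by rw [mder]; positivity)
  rw [smul_eq_mul, habs, mfun, h1]
  rw [Real.inv_rpow hP.le, Real.div_rpow hEpos.le hP.le]
  rw [show Real.exp (-((c-x)*u)) = E ^ (c-x) by
    rw [Real.rpow_def_of_pos hEpos, hE, Real.log_exp]; ring_nf]
  rw [Real.rpow_neg hP.le]
  have e1 : E ^ (c-x) = E * E ^ (c-x-1) := by
    rw [show c - x = 1 + (c-x-1) by ring, Real.rpow_add hEpos, Real.rpow_one]
    ring_nf
  have e2 : (1+E) ^ (c:ℝ) = (1+E)^2 * (1+E) ^ (x-1) * (1+E) ^ (c-x-1) := by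
    rw [show ((1+E):ℝ)^2 = (1+E) ^ ((2:ℕ):ℝ) by rw [Real.rpow_natCast],
      ← Real.rpow_add hP, ← Real.rpow_add hP]
    norm_num
    ring_nf
  rw [e1, e2]
  have n1 : (1+E) ^ (x-1) ≠ 0 := (Real.rpow_pos_of_pos hP _).ne'
  have n2 : (1+E) ^ (c-x-1) ≠ 0 := (Real.rpow_pos_of_pos hP _).ne'
  field_simp

lemma B_subst_eq {c x : ℝ} :
    (∫ t in Ioo (0:ℝ) 1, t ^ (x-1) * (1-t) ^ (c-x-1))
      = ∫ u : ℝ, Real.exp (-((c-x)*u)) * (1 + Real.exp (-u)) ^ (-c) := by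
  have h := integral_image_eq_integral_abs_deriv_smul MeasurableSet.univ
    (fun u _ => (mfun_hasDeriv u).hasDerivWithinAt)
    (mfun_mono.injective.injOn) (fun t => t ^ (x-1) * (1-t) ^ (c-x-1))
  rw [mfun_image] at h
  rw [h]
  rw [Measure.restrict_univ]
  exact integral_congr_ae (Filter.Eventually.of_forall (fun u => mfun_algebra u))

lemma B_subst_integrable {c x : ℝ} (hx : 0 < x) (hxc : x < c) :
    Integrable (fun u : ℝ => Real.exp (-((c-x)*u)) * (1 + Real.exp (-u)) ^ (-c)) := by
  have h := integrableOn_image_iff_integrableOn_abs_deriv_smul MeasurableSet.univ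
    (fun u _ => (mfun_hasDeriv u).hasDerivWithinAt)
    (mfun_mono.injective.injOn) (fun t => t ^ (x-1) * (1-t) ^ (c-x-1))
  rw [mfun_image] at h
  have h2 : IntegrableOn (fun t : ℝ => t ^ (x-1) * (1-t) ^ (c-x-1)) (Ioo (0:ℝ) 1) :=
    beta_integrable hx (by linarith)
  rw [h] at h2
  rw [← integrableOn_univ]
  exact h2.congr_fun (fun u _ => mfun_algebra u) MeasurableSet.univ

noncomputable def Bker (c w : ℝ) (u : ℝ) : ℝ := Real.exp (-(w*u)) * (1 + Real.exp (-u)) ^ (-c)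

lemma Bker_neg {c w : ℝ} (u : ℝ) : Bker c w (-u) = Bker c (c-w) u := by
  unfold Bker
  have h1 : (1:ℝ) + Real.exp u = Real.exp u * (1 + Real.exp (-u)) := by
    rw [mul_add, mul_one, ← Real.exp_add]
    simp [add_comm]
  rw [neg_neg, h1, Real.mul_rpow (Real.exp_pos u).le (by positivity)]
  rw [← Real.exp_mul, ← mul_assoc, ← Real.exp_add]
  ring_nf

lemma fold_integral {F : ℝ → ℝ} (hF : Integrable F) :
    ∫ u : ℝ, F u = ∫ u in Ioi (0:ℝ), (F u + F (-u)) := by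
  rw [← intervalIntegral.integral_Iic_add_Ioi (hF.integrableOn) (hF.integrableOn) (b := 0)]
  have h2 : (∫ x in Iic (0:ℝ), F x) = ∫ x in Ioi (0:ℝ), F (-x) := by
    rw [integral_comp_neg_Ioi 0 F, neg_zero]
  rw [h2, ← integral_add ((hF.comp_neg).integrableOn) (hF.integrableOn)]
  apply setIntegral_congr_ae measurableSet_Ioi
  filter_upwards with u _
  ring


lemma Bsum_intOn {c x : ℝ} (hx : 0 < x) (hxc : x < c) :
    IntegrableOn (fun u => Bker c (c-x) u + Bker c x u) (Ioi (0:ℝ)) := by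
  have hF : Integrable (Bker c (c-x)) := B_subst_integrable hx hxc
  have hneg : (fun u => Bker c (c-x) (-u)) = fun u => Bker c x u := by
    funext u
    rw [Bker_neg, show c - (c-x) = x by ring]
  have h2 : Integrable (fun u => Bker c x u) := by
    rw [← hneg]; exact hF.comp_neg
  exact (hF.integrableOn).add (h2.integrableOn)

lemma Bc_rep {c x : ℝ} (hx : 0 < x) (hxc : x < c) :
    Bc c x = ∫ u in Ioi (0:ℝ), (Bker c (c-x) u + Bker c x u) := by
  have h1 : Bc c x = ∫ t in Ioo (0:ℝ) 1, t ^ (x-1) * (1-t) ^ (c-x-1) := by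
    rw [beta_real hx (show 0 < c - x by linarith), show x + (c-x) = c by ring, Bc]
  rw [h1, B_subst_eq, fold_integral (B_subst_integrable hx hxc)]
  apply setIntegral_congr_fun measurableSet_Ioi
  intro u _
  have h3 := Bker_neg (c := c) (w := c - x) u
  rw [show c - (c-x) = x by ring] at h3
  simp only [Bker] at h3
  simp only [h3, Bker]

lemma core {c x y : ℝ} (hc : 0 < c) (hx : 0 < x) (hxy : x < y) (hy : y < c/2) :
    Bc c x - Rc c x < Bc c y - Rc c y := by
  have hyc : y < c := by linarith
  have hcy : 0 < c - y := by linarith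
  have hcx : 0 < c - x := by linarith
  have hd : 0 < c - x - y := by linarith
  have hxc2 : x < c := by linarith
  have hcyx : c - y ≤ c - x := by linarith
  -- the four integral representations
  have hQ1val := psi_int_val hx hxy.le
  have hQ2val := psi_int_val hcy hcyx
  have hQ1int := quot_integrable hx hxy.le
  have hQ2int := quot_integrable hcy hcyx
  have hBxrep := Bc_rep hx hxc2
  have hByrep := Bc_rep (show (0:ℝ) < y by linarith) hyc
  have hBxint := Bsum_intOn hx hxc2
  have hByint := Bsum_intOn (show (0:ℝ) < y by linarith) hyc
  set G : ℝ → ℝ := fun u =>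
    ((Real.exp (-(x*u)) - Real.exp (-(y*u))) / (1 - Real.exp (-u))
      - (Real.exp (-((c-y)*u)) - Real.exp (-((c-x)*u))) / (1 - Real.exp (-u)))
    + ((Bker c (c-y) u + Bker c y u) - (Bker c (c-x) u + Bker c x u)) with hG
  have e2 := integral_sub hQ1int hQ2int
  have e3 := integral_sub hByint hBxint
  have e1 := integral_add (hQ1int.sub hQ2int) (hByint.sub hBxint)
  simp only [Pi.sub_apply] at e1 e2 e3
  have hGval : (∫ u in Ioi (0:ℝ), G u)
      = ((digamma y - digamma x) - (digamma (c-x) - digamma (c-y)))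
        + (Bc c y - Bc c x) := by
    rw [hG]
    rw [e1, e2, e3, hQ1val, hQ2val, ← hBxrep, ← hByrep]
  have hGpos : ∀ u ∈ Ioi (0:ℝ), 0 < G u := by
    intro u hu
    have hu0 : (0:ℝ) < u := hu
    have hA : 0 < Real.exp (-(x*u)) - Real.exp (-(y*u)) := by
      have : -(y*u) < -(x*u) := by nlinarith
      have := Real.exp_lt_exp.2 this; linarith
    set A := Real.exp (-(x*u)) - Real.exp (-(y*u)) with hAdef
    have hEd : Real.exp (-((c-x-y)*u)) < 1 := by
      rw [Real.exp_lt_one_iff]; nlinarith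
    have hEd0 : 0 < Real.exp (-((c-x-y)*u)) := Real.exp_pos _
    set D := A * (1 - Real.exp (-((c-x-y)*u))) with hDdef
    have hD : 0 < D := by
      apply mul_pos hA; linarith
    have hden := den_pos hu0
    have hden1 : 1 - Real.exp (-u) < 1 := by
      have := Real.exp_pos (-u); linarith
    have hinv : 1 ≤ (1 - Real.exp (-u))⁻¹ := by
      rw [le_inv_comm₀ one_pos hden]
      simpa using hden1.le
    have hk2 : (1 + Real.exp (-u)) ^ (-c) < 1 := by
      apply Real.rpow_lt_one_of_one_lt_of_neg
      · have := Real.exp_pos (-u); linarith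
      · linarith
    have hk20 : 0 < (1 + Real.exp (-u)) ^ (-c) :=
      Real.rpow_pos_of_pos (one_add_exp_pos u) _
    have k1 : Real.exp (-((c-y)*u)) = Real.exp (-((c-x-y)*u)) * Real.exp (-(x*u)) := by
      rw [← Real.exp_add]; ring_nf
    have k2 : Real.exp (-((c-x)*u)) = Real.exp (-((c-x-y)*u)) * Real.exp (-(y*u)) := by
      rw [← Real.exp_add]; ring_nf
    have hpart1 : (Real.exp (-(x*u)) - Real.exp (-(y*u))) / (1 - Real.exp (-u))
        - (Real.exp (-((c-y)*u)) - Real.exp (-((c-x)*u))) / (1 - Real.exp (-u))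
        = D * (1 - Real.exp (-u))⁻¹ := by
      rw [div_sub_div_same, k1, k2, hDdef, hAdef, div_eq_mul_inv]
      ring_nf
    have hpart2 : (Bker c (c-y) u + Bker c y u) - (Bker c (c-x) u + Bker c x u)
        = -(D * ((1 + Real.exp (-u)) ^ (-c))) := by
      simp only [Bker]
      rw [k1, k2, hDdef, hAdef]
      ring
    have hGu : G u = D * (1 - Real.exp (-u))⁻¹ - D * ((1 + Real.exp (-u)) ^ (-c)) := by
      simp only [hG]
      rw [hpart1, hpart2]
      ring
    rw [hGu]
    have l1 : D * ((1 + Real.exp (-u)) ^ (-c)) < D * 1 :=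
      mul_lt_mul_of_pos_left hk2 hD
    have l2 : D * 1 ≤ D * (1 - Real.exp (-u))⁻¹ :=
      mul_le_mul_of_nonneg_left hinv hD.le
    linarith
  have hGintOn : IntegrableOn G (Ioi (0:ℝ)) :=
    ((hQ1int.sub hQ2int).add (hByint.sub hBxint))
  have hae : 0 ≤ᵐ[volume.restrict (Ioi (0:ℝ))] G := by
    filter_upwards [ae_restrict_mem measurableSet_Ioi] with u hu using (hGpos u hu).le
  have hpos : 0 < ∫ u in Ioi (0:ℝ), G u := by
    rw [setIntegral_pos_iff_support_of_nonneg_ae hae hGintOn]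
    have hsub : Ioi (0:ℝ) ⊆ Function.support G ∩ Ioi 0 :=
      fun u hu => ⟨(hGpos u hu).ne', hu⟩
    have hm : volume (Ioi (0:ℝ)) ≤ volume (Function.support G ∩ Ioi 0) := measure_mono hsub
    rw [Real.volume_Ioi] at hm
    exact lt_of_lt_of_le (by norm_num) hm
  rw [hGval] at hpos
  simp only [Rc]
  linarith

lemma delta_symm (c x : ℝ) : Bc c (c - x) - Rc c (c - x) = Bc c x - Rc c x := by
  simp only [Bc, Rc, show c - (c - x) = x by ring]
  rw [mul_comm]
  ring

end StmtAux

theorem stmt_11 (c : ℝ) (hc : 0 < c) :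
    (∀ x ∈ Set.Ioo 0 c, Bc c (c - x) - Rc c (c - x) = Bc c x - Rc c x) ∧
      StrictMonoOn (fun x => Bc c x - Rc c x) (Set.Ioo 0 (c / 2)) ∧
      StrictAntiOn (fun x => Bc c x - Rc c x) (Set.Ioo (c / 2) c) := by
  refine ⟨fun x _ => StmtAux.delta_symm c x, ?_, ?_⟩
  · intro x hx y hy hxy
    exact StmtAux.core hc hx.1 hxy hy.2
  · intro x hx y hy hxy
    have h1 : (0:ℝ) < c - y := by linarith [hy.2]
    have h2 : c - y < c - x := by linarith
    have h3 : c - x < c / 2 := by linarith [hx.1]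
    have := StmtAux.core hc h1 h2 h3
    have e1 := StmtAux.delta_symm c x
    have e2 := StmtAux.delta_symm c y
    simp only []
    linarith
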